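/- Let X = {a_1,…,a_ℓ} be a finite set of ℓ distinct points and N ≥ 2. For any λ ∈ P_{1/N}(X), γ_λ is the unique element of P_sym(X^N) whose two-point marginal equals (N/(N−1)) λ ⊗ λ − (1/(N−1)) Σ_{i=1}^ℓ λ({a_i}) δ_{a_i} ⊗ δ_{a_i}: if γ ∈ P_sym(X^N) satisfies M_2γ = M_2γ_λ, then γ = γ_λ. -/

import Mathlib

open Finset


noncomputable def symmetrize (N ℓ : ℕ) (γ : (Fin N → Fin ℓ) → ℝ) : (Fin N → Fin ℓ) → ℝ :=
  fun x => (1 / (Nat.factorial N : ℝ)) * ∑ σ : Equiv.Perm (Fin N), γ (x ∘ σ)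

def IsProbVec {α : Type*} [Fintype α] (p : α → ℝ) : Prop :=
  (∀ x, 0 ≤ p x) ∧ ∑ x, p x = 1

def IsSymmFun (N ℓ : ℕ) (γ : (Fin N → Fin ℓ) → ℝ) : Prop :=
  ∀ (σ : Equiv.Perm (Fin N)) (x : Fin N → Fin ℓ), γ (x ∘ σ) = γ x

def PSym (N ℓ : ℕ) : Set ((Fin N → Fin ℓ) → ℝ) :=
  {γ | IsProbVec γ ∧ IsSymmFun N ℓ γ}

noncomputable def margOf (N ℓ : ℕ) (x : Fin N → Fin ℓ) : Fin ℓ → ℝ :=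
  fun j => ((Finset.univ.filter fun k => x k = j).card : ℝ) / (N : ℝ)

noncomputable def QuantFinset (N ℓ : ℕ) : Finset (Fin ℓ → ℝ) :=
  Finset.image (margOf N ℓ) Finset.univ

noncomputable def gammaLam (N ℓ : ℕ) (lam : Fin ℓ → ℝ) : (Fin N → Fin ℓ) → ℝ :=
  if h : ∃ i : Fin N → Fin ℓ, margOf N ℓ i = lam then
    symmetrize N ℓ (fun x => if x = h.choose then 1 else 0)
  else 0

noncomputable def marg1 (N ℓ : ℕ) [NeZero N] (γ : (Fin N → Fin ℓ) → ℝ) : Fin ℓ → ℝ :=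
  fun j => ∑ x : Fin N → Fin ℓ, if x 0 = j then γ x else 0

noncomputable def marg2 (N ℓ : ℕ) [NeZero N] (γ : (Fin N → Fin ℓ) → ℝ) : Fin ℓ → Fin ℓ → ℝ :=
  fun j k => ∑ x : Fin N → Fin ℓ, if x 0 = j ∧ x 1 = k then γ x else 0

noncomputable def cCoef (N ℓ : ℕ) (c : (Fin N → Fin ℓ) → ℝ) (lam : Fin ℓ → ℝ) : ℝ :=
  ∑ x : Fin N → Fin ℓ, gammaLam N ℓ lam x * c x

section H
variable {N ℓ : ℕ}

private def cntH (x : Fin N → Fin ℓ) (j : Fin ℓ) : ℕ := (univ.filter fun k => x k = j).card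

private def compPermH (N ℓ : ℕ) (σ : Equiv.Perm (Fin N)) : (Fin N → Fin ℓ) ≃ (Fin N → Fin ℓ) where
  toFun x := x ∘ σ
  invFun x := x ∘ σ.symm
  left_inv x := by funext k; simp
  right_inv x := by funext k; simp

private lemma sum_comp_permH (σ : Equiv.Perm (Fin N)) (F : (Fin N → Fin ℓ) → ℝ) :
    ∑ x : Fin N → Fin ℓ, F (x ∘ σ) = ∑ x, F x :=
  Fintype.sum_equiv (compPermH N ℓ σ) _ _ (fun _ => rfl)

private lemma cnt_compH (σ : Equiv.Perm (Fin N)) (x : Fin N → Fin ℓ) (j : Fin ℓ) :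
    cntH (x ∘ σ) j = cntH x j := by
  unfold cntH
  apply Finset.card_equiv σ
  simp

private lemma cnt_castH (x : Fin N → Fin ℓ) (j : Fin ℓ) :
    (cntH x j : ℝ) = ∑ k : Fin N, if x k = j then (1:ℝ) else 0 := by
  unfold cntH
  rw [Finset.card_filter]
  push_cast [apply_ite]
  simp

private lemma exists_permH (hN : N ≠ 0) {x y : Fin N → Fin ℓ}
    (h : margOf N ℓ x = margOf N ℓ y) : ∃ σ : Equiv.Perm (Fin N), x ∘ σ = y := by
  have hc : ∀ j, cntH y j = cntH x j := by
    intro j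
    have h1 := congrFun h j
    unfold margOf at h1
    have hN' : (N:ℝ) ≠ 0 := Nat.cast_ne_zero.mpr hN
    field_simp at h1
    exact_mod_cast h1.symm
  have e : ∀ j : Fin ℓ, {k // y k = j} ≃ {k // x k = j} := fun j =>
    Fintype.equivOfCardEq (by
      rw [Fintype.card_subtype, Fintype.card_subtype]
      exact hc j)
  refine ⟨(Equiv.sigmaFiberEquiv y).symm.trans
    ((Equiv.sigmaCongrRight e).trans (Equiv.sigmaFiberEquiv x)), funext fun k => ?_⟩
  exact ((e (y k)) ⟨k, rfl⟩).2

private lemma zero_ne_one_finH [NeZero N] (hN : 2 ≤ N) : (0 : Fin N) ≠ 1 := by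
  intro hh
  have := congrArg Fin.val hh
  rw [Fin.val_zero, Fin.val_one', Nat.mod_eq_of_lt (by omega)] at this
  omega

private lemma exists_perm_01H [NeZero N] (hN : 2 ≤ N) {k k' : Fin N} (hkk' : k ≠ k') :
    ∃ σ : Equiv.Perm (Fin N), σ 0 = k ∧ σ 1 = k' := by
  have h01 : (0:Fin N) ≠ 1 := zero_ne_one_finH hN
  set τ := Equiv.swap (0:Fin N) k with hτ
  set k'' := τ.symm k' with hk''
  have hτ0 : τ 0 = k := Equiv.swap_apply_left _ _
  have hτk'' : τ k'' = k' := Equiv.apply_symm_apply τ k'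
  have hk''0 : k'' ≠ 0 := by
    intro hh
    apply hkk'
    rw [← hτ0, ← hτk'', hh]
  refine ⟨τ * Equiv.swap 1 k'', ?_, ?_⟩
  · have h1 : Equiv.swap (1:Fin N) k'' 0 = 0 :=
      Equiv.swap_apply_of_ne_of_ne h01 (Ne.symm hk''0)
    simp only [Equiv.Perm.mul_apply, h1, hτ0]
  · simp only [Equiv.Perm.mul_apply, Equiv.swap_apply_left, hτk'']

private lemma marg1_eqH [NeZero N] {γ : (Fin N → Fin ℓ) → ℝ} (hs : IsSymmFun N ℓ γ)
    (k : Fin N) (j : Fin ℓ) :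
    ∑ x : Fin N → Fin ℓ, (if x k = j then γ x else 0) = marg1 N ℓ γ j := by
  set σ := Equiv.swap (0:Fin N) k with hσdef
  have hσ0 : σ 0 = k := Equiv.swap_apply_left _ _
  calc ∑ x : Fin N → Fin ℓ, (if x k = j then γ x else 0)
      = ∑ x : Fin N → Fin ℓ, (if (x ∘ σ) 0 = j then γ (x ∘ σ) else 0) := by
        apply Finset.sum_congr rfl; intro x _
        simp [Function.comp_apply, hσ0, hs σ x]
    _ = marg1 N ℓ γ j := sum_comp_permH σ (fun y => if y 0 = j then γ y else 0)

private lemma marg2_eqH [NeZero N] (hN : 2 ≤ N) {γ : (Fin N → Fin ℓ) → ℝ} (hs : IsSymmFun N ℓ γ)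
    {k k' : Fin N} (hkk' : k ≠ k') (j j' : Fin ℓ) :
    ∑ x : Fin N → Fin ℓ, (if x k = j ∧ x k' = j' then γ x else 0) = marg2 N ℓ γ j j' := by
  obtain ⟨σ, h0, h1⟩ := exists_perm_01H hN hkk'
  calc ∑ x : Fin N → Fin ℓ, (if x k = j ∧ x k' = j' then γ x else 0)
      = ∑ x : Fin N → Fin ℓ, (if (x ∘ σ) 0 = j ∧ (x ∘ σ) 1 = j' then γ (x ∘ σ) else 0) := by
        apply Finset.sum_congr rfl; intro x _
        simp [Function.comp_apply, h0, h1, hs σ x]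
    _ = marg2 N ℓ γ j j' := sum_comp_permH σ (fun y => if y 0 = j ∧ y 1 = j' then γ y else 0)

private lemma moment1H [NeZero N] {γ : (Fin N → Fin ℓ) → ℝ} (hs : IsSymmFun N ℓ γ) (j : Fin ℓ) :
    ∑ x : Fin N → Fin ℓ, γ x * (cntH x j : ℝ) = (N:ℝ) * marg1 N ℓ γ j := by
  have h1 : ∀ x : Fin N → Fin ℓ, γ x * (cntH x j:ℝ)
      = ∑ k : Fin N, (if x k = j then γ x else 0) := by
    intro x; rw [cnt_castH, Finset.mul_sum]
    apply Finset.sum_congr rfl; intro k _; split <;> simp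
  simp_rw [h1]
  rw [Finset.sum_comm]
  have h2 : ∀ k : Fin N, ∑ x : Fin N → Fin ℓ, (if x k = j then γ x else 0) = marg1 N ℓ γ j :=
    fun k => marg1_eqH hs k j
  simp_rw [h2]
  rw [Finset.sum_const, card_univ, Fintype.card_fin, nsmul_eq_mul]

private lemma moment2H [NeZero N] (hN : 2 ≤ N) {γ : (Fin N → Fin ℓ) → ℝ}
    (hs : IsSymmFun N ℓ γ) (j : Fin ℓ) :
    ∑ x : Fin N → Fin ℓ, γ x * (cntH x j : ℝ)^2
      = (N:ℝ) * ((N:ℝ) - 1) * marg2 N ℓ γ j j + (N:ℝ) * marg1 N ℓ γ j := by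
  have expand : ∀ x : Fin N → Fin ℓ, γ x * (cntH x j:ℝ)^2
      = ∑ p : Fin N × Fin N, (if x p.1 = j ∧ x p.2 = j then γ x else 0) := by
    intro x
    rw [Fintype.sum_prod_type, cnt_castH, sq, Finset.sum_mul_sum, Finset.mul_sum]
    apply Finset.sum_congr rfl; intro k _
    rw [Finset.mul_sum]
    apply Finset.sum_congr rfl; intro k' _
    by_cases hc1 : x k = j <;> by_cases hc2 : x k' = j <;> simp [hc1, hc2]
  simp_rw [expand]
  rw [Finset.sum_comm]
  have key : ∀ p : Fin N × Fin N,
      ∑ x : Fin N → Fin ℓ, (if x p.1 = j ∧ x p.2 = j then γ x else 0)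
      = if p.1 = p.2 then marg1 N ℓ γ j else marg2 N ℓ γ j j := by
    intro p
    by_cases h : p.1 = p.2
    · rw [if_pos h, ← marg1_eqH hs p.1 j]
      apply Finset.sum_congr rfl; intro x _
      simp [← h]
    · rw [if_neg h]; exact marg2_eqH hN hs h j j
  simp_rw [key]
  have h1 : ∀ p : Fin N × Fin N, (if p.1 = p.2 then marg1 N ℓ γ j else marg2 N ℓ γ j j)
      = marg2 N ℓ γ j j + (if p.1 = p.2 then marg1 N ℓ γ j - marg2 N ℓ γ j j else 0) := by
    intro p; split <;> ring
  simp_rw [h1, Finset.sum_add_distrib, Finset.sum_const, card_univ]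
  rw [Fintype.sum_prod_type]
  simp_rw [Finset.sum_ite_eq, Finset.mem_univ, if_pos, Finset.sum_const, card_univ,
    Fintype.card_fin, Fintype.card_prod, Fintype.card_fin, nsmul_eq_mul]
  push_cast
  ring

private lemma marg1_from_marg2H [NeZero N] (γ : (Fin N → Fin ℓ) → ℝ) (j : Fin ℓ) :
    marg1 N ℓ γ j = ∑ k : Fin ℓ, marg2 N ℓ γ j k := by
  unfold marg1 marg2
  rw [Finset.sum_comm]
  apply Finset.sum_congr rfl; intro x _
  have h1 : ∀ k : Fin ℓ, (if x 0 = j ∧ x 1 = k then γ x else 0)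
      = if x 1 = k then (if x 0 = j then γ x else 0) else 0 := by
    intro k; by_cases hc1 : x 0 = j <;> by_cases hc2 : x 1 = k <;> simp [hc1, hc2]
  simp_rw [h1, Finset.sum_ite_eq, Finset.mem_univ, if_pos]

private lemma margOf_compH (σ : Equiv.Perm (Fin N)) (x : Fin N → Fin ℓ) :
    margOf N ℓ (x ∘ σ) = margOf N ℓ x := by
  funext j
  have h := cnt_compH σ x j
  unfold cntH at h
  unfold margOf
  rw [h]

private lemma gl_applyH [NeZero N] (lam : Fin ℓ → ℝ)
    (hx : ∃ i : Fin N → Fin ℓ, margOf N ℓ i = lam) (x : Fin N → Fin ℓ) :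
    gammaLam N ℓ lam x
      = (1 / (Nat.factorial N : ℝ)) *
        ∑ σ : Equiv.Perm (Fin N), (if x ∘ σ = hx.choose then (1:ℝ) else 0) := by
  rw [gammaLam, dif_pos hx]; rfl

private lemma gl_nonnegH [NeZero N] (lam : Fin ℓ → ℝ)
    (hx : ∃ i : Fin N → Fin ℓ, margOf N ℓ i = lam) (x : Fin N → Fin ℓ) :
    0 ≤ gammaLam N ℓ lam x := by
  rw [gl_applyH lam hx x]
  apply mul_nonneg (by positivity)
  apply Finset.sum_nonneg
  intro σ _; split <;> norm_num

private lemma gl_symmH [NeZero N] (lam : Fin ℓ → ℝ)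
    (hx : ∃ i : Fin N → Fin ℓ, margOf N ℓ i = lam) :
    IsSymmFun N ℓ (gammaLam N ℓ lam) := by
  intro τ x
  rw [gl_applyH lam hx, gl_applyH lam hx]
  congr 1
  exact Fintype.sum_equiv (Equiv.mulLeft τ)
    (fun σ => if (x ∘ τ) ∘ σ = hx.choose then (1:ℝ) else 0)
    (fun σ => if x ∘ σ = hx.choose then (1:ℝ) else 0)
    (fun σ => rfl)

private lemma gl_sumH [NeZero N] (lam : Fin ℓ → ℝ)
    (hx : ∃ i : Fin N → Fin ℓ, margOf N ℓ i = lam) :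
    ∑ x : Fin N → Fin ℓ, gammaLam N ℓ lam x = 1 := by
  simp_rw [gl_applyH lam hx]
  rw [← Finset.mul_sum, Finset.sum_comm]
  have h1 : ∀ σ : Equiv.Perm (Fin N),
      ∑ x : Fin N → Fin ℓ, (if x ∘ σ = hx.choose then (1:ℝ) else 0) = 1 := by
    intro σ
    have hcond : ∀ x : Fin N → Fin ℓ, (x ∘ ⇑σ = hx.choose) ↔ x = hx.choose ∘ ⇑σ.symm := by
      intro x; constructor
      · intro h; funext k
        have := congrFun h (σ.symm k)
        simpa using this
      · intro h; subst h; funext k; simp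
    calc ∑ x : Fin N → Fin ℓ, (if x ∘ σ = hx.choose then (1:ℝ) else 0)
        = ∑ x : Fin N → Fin ℓ, (if x = hx.choose ∘ ⇑σ.symm then (1:ℝ) else 0) := by
          apply Finset.sum_congr rfl; intro x _
          exact if_congr (hcond x) rfl rfl
      _ = 1 := by rw [Finset.sum_ite_eq' univ (hx.choose ∘ ⇑σ.symm) (fun _ => (1:ℝ))]; simp
  simp_rw [h1]
  rw [Finset.sum_const, card_univ, nsmul_eq_mul, mul_one]
  rw [one_div, Fintype.card_perm, Fintype.card_fin, inv_mul_cancel₀]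
  exact_mod_cast Nat.factorial_ne_zero N

private lemma gl_suppH [NeZero N] (lam : Fin ℓ → ℝ)
    (hx : ∃ i : Fin N → Fin ℓ, margOf N ℓ i = lam) (x : Fin N → Fin ℓ)
    (hne : gammaLam N ℓ lam x ≠ 0) : margOf N ℓ x = lam := by
  rw [gl_applyH lam hx x] at hne
  have hex : ∃ σ : Equiv.Perm (Fin N), x ∘ ⇑σ = hx.choose := by
    by_contra hcon
    push_neg at hcon
    apply hne
    rw [Finset.sum_eq_zero (fun σ _ => if_neg (hcon σ)), mul_zero]
  obtain ⟨σ, hσ⟩ := hex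
  have h1 : margOf N ℓ x = margOf N ℓ hx.choose := by
    rw [← hσ, margOf_compH]
  rw [h1, hx.choose_spec]

private lemma eq_of_symmH [NeZero N] (hNe : N ≠ 0) {lam : Fin ℓ → ℝ}
    (hx : ∃ i : Fin N → Fin ℓ, margOf N ℓ i = lam)
    {γ γ' : (Fin N → Fin ℓ) → ℝ}
    (hsum : ∑ x, γ x = 1) (hs : IsSymmFun N ℓ γ)
    (hsupp : ∀ x, γ x ≠ 0 → margOf N ℓ x = lam)
    (hsum' : ∑ x, γ' x = 1) (hs' : IsSymmFun N ℓ γ')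
    (hsupp' : ∀ x, γ' x ≠ 0 → margOf N ℓ x = lam) :
    γ = γ' := by
  classical
  obtain ⟨x₀, hx₀⟩ := hx
  set O := univ.filter fun y : Fin N → Fin ℓ => margOf N ℓ y = lam with hO
  have key : ∀ (δ : (Fin N → Fin ℓ) → ℝ), IsSymmFun N ℓ δ →
      (∀ x, δ x ≠ 0 → margOf N ℓ x = lam) →
      ∀ y, δ y = if margOf N ℓ y = lam then δ x₀ else 0 := by
    intro δ hsymm hsupp y
    by_cases hy : margOf N ℓ y = lam
    · rw [if_pos hy]
      obtain ⟨σ, hσ⟩ := exists_permH hNe (hx₀.trans hy.symm)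
      rw [← hσ]; exact hsymm σ x₀
    · rw [if_neg hy]
      by_contra hne; exact hy (hsupp y hne)
  have hconst := key γ hs hsupp
  have hconst' := key γ' hs' hsupp'
  have hcnt : ∀ (δ : (Fin N → Fin ℓ) → ℝ),
      (∀ y, δ y = if margOf N ℓ y = lam then δ x₀ else 0) → (∑ x, δ x = 1) →
      (O.card : ℝ) * δ x₀ = 1 := by
    intro δ hconst hsum
    rw [← hsum]
    calc (O.card : ℝ) * δ x₀ = ∑ _x ∈ O, δ x₀ := by
          rw [Finset.sum_const, nsmul_eq_mul]
      _ = ∑ x : Fin N → Fin ℓ, (if margOf N ℓ x = lam then δ x₀ else 0) :=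
          (Finset.sum_filter _ _)
      _ = ∑ x, δ x := by
          apply Finset.sum_congr rfl; intro x _; exact (hconst x).symm
  have h1 := hcnt γ hconst hsum
  have h2 := hcnt γ' hconst' hsum'
  have hcard : (O.card : ℝ) ≠ 0 := by
    have hx₀O : x₀ ∈ O := by rw [hO]; simp [hx₀]
    have : 0 < O.card := Finset.card_pos.mpr ⟨x₀, hx₀O⟩
    exact_mod_cast this.ne'
  have hval : γ x₀ = γ' x₀ := mul_left_cancel₀ hcard (h1.trans h2.symm)
  funext y
  rw [hconst y, hconst' y, hval]

end H

/-- γ_λ is the unique symmetric probability measure on X^N with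
its two-point marginal: if γ ∈ P_sym(X^N) and M₂γ = M₂γ_λ then γ = γ_λ. -/
theorem gammaLam_unique_from_two_marginal (ℓ N : ℕ) [NeZero N] (hN : 2 ≤ N)
    (lam : Fin ℓ → ℝ) (hlam : lam ∈ QuantFinset N ℓ)
    (γ : (Fin N → Fin ℓ) → ℝ) (hγ : γ ∈ PSym N ℓ)
    (h2 : marg2 N ℓ γ = marg2 N ℓ (gammaLam N ℓ lam)) :
    γ = gammaLam N ℓ lam := by
  obtain ⟨⟨hpos, hsum⟩, hsymm⟩ := hγ
  have hNe : N ≠ 0 := by omega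
  have hNR : (N:ℝ) ≠ 0 := Nat.cast_ne_zero.mpr hNe
  have hx : ∃ i : Fin N → Fin ℓ, margOf N ℓ i = lam := by
    rw [QuantFinset, Finset.mem_image] at hlam
    obtain ⟨i, _, hi⟩ := hlam
    exact ⟨i, hi⟩
  set gl := gammaLam N ℓ lam with hgl
  have glsum : ∑ x : Fin N → Fin ℓ, gl x = 1 := gl_sumH lam hx
  have glsymm : IsSymmFun N ℓ gl := gl_symmH lam hx
  have glsupp : ∀ x, gl x ≠ 0 → margOf N ℓ x = lam := gl_suppH lam hx
  -- one-point marginals agree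
  have hm1 : marg1 N ℓ γ = marg1 N ℓ gl := by
    funext j
    rw [marg1_from_marg2H, marg1_from_marg2H, h2]
  -- the quadratic functional
  have hEF : ∀ (γ' : (Fin N → Fin ℓ) → ℝ), IsSymmFun N ℓ γ' → (∑ x, γ' x = 1) →
      ∑ x : Fin N → Fin ℓ, γ' x * (∑ j : Fin ℓ, ((cntH x j : ℝ) - (N:ℝ) * lam j)^2)
      = ∑ j : Fin ℓ, ((N:ℝ)*((N:ℝ)-1)*marg2 N ℓ γ' j j + (N:ℝ)*marg1 N ℓ γ' j
          - 2*(N:ℝ)*lam j*((N:ℝ)*marg1 N ℓ γ' j) + (N:ℝ)^2*(lam j)^2) := by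
    intro γ' hs' hsum'
    simp_rw [Finset.mul_sum]
    rw [Finset.sum_comm]
    apply Finset.sum_congr rfl
    intro j _
    have expand : ∀ x : Fin N → Fin ℓ, γ' x * ((cntH x j:ℝ) - (N:ℝ)*lam j)^2
        = γ' x * (cntH x j:ℝ)^2 - (2*(N:ℝ)*lam j) * (γ' x * (cntH x j:ℝ))
          + ((N:ℝ)^2*(lam j)^2) * γ' x := by
      intro x; ring
    simp_rw [expand]
    rw [Finset.sum_add_distrib, Finset.sum_sub_distrib, ← Finset.mul_sum, ← Finset.mul_sum,
      moment2H hN hs' j, moment1H hs' j, hsum']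
    ring
  -- the functional vanishes for gl
  have hzero_gl : ∑ x : Fin N → Fin ℓ,
      gl x * (∑ j : Fin ℓ, ((cntH x j : ℝ) - (N:ℝ) * lam j)^2) = 0 := by
    apply Finset.sum_eq_zero
    intro x _
    by_cases hgx : gl x = 0
    · rw [hgx, zero_mul]
    · have hm := glsupp x hgx
      have hF : (∑ j : Fin ℓ, ((cntH x j : ℝ) - (N:ℝ) * lam j)^2) = 0 := by
        apply Finset.sum_eq_zero
        intro j _
        have hcnt : (cntH x j : ℝ) = (N:ℝ) * lam j := by
          have h := congrFun hm j
          unfold margOf at h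
          unfold cntH
          field_simp at h
          rw [h]
        rw [hcnt]; ring
      rw [hF, mul_zero]
  -- hence it vanishes for γ
  have hzero : ∑ x : Fin N → Fin ℓ,
      γ x * (∑ j : Fin ℓ, ((cntH x j : ℝ) - (N:ℝ) * lam j)^2) = 0 := by
    rw [hEF γ hsymm hsum, ← hzero_gl, hEF gl glsymm glsum, h2, hm1]
  -- all terms vanish
  have hterm : ∀ x : Fin N → Fin ℓ,
      γ x * (∑ j : Fin ℓ, ((cntH x j : ℝ) - (N:ℝ) * lam j)^2) = 0 := by
    have hnn : ∀ x ∈ (univ : Finset (Fin N → Fin ℓ)),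
        0 ≤ γ x * (∑ j : Fin ℓ, ((cntH x j : ℝ) - (N:ℝ) * lam j)^2) := by
      intro x _
      apply mul_nonneg (hpos x)
      apply Finset.sum_nonneg
      intro j _; positivity
    intro x
    exact (Finset.sum_eq_zero_iff_of_nonneg hnn).mp hzero x (Finset.mem_univ x)
  -- support of γ
  have γsupp : ∀ x, γ x ≠ 0 → margOf N ℓ x = lam := by
    intro x hne
    have hF : (∑ j : Fin ℓ, ((cntH x j : ℝ) - (N:ℝ) * lam j)^2) = 0 := by
      rcases mul_eq_zero.mp (hterm x) with h | h
      · exact absurd h hne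
      · exact h
    have hsq : ∀ j ∈ (univ : Finset (Fin ℓ)),
        ((cntH x j : ℝ) - (N:ℝ) * lam j)^2 = 0 := by
      apply (Finset.sum_eq_zero_iff_of_nonneg (fun j _ => by positivity)).mp hF
    funext j
    have h := pow_eq_zero_iff (n := 2) (by norm_num) |>.mp (hsq j (Finset.mem_univ j))
    have hcnt : (cntH x j : ℝ) = (N:ℝ) * lam j := by linarith [sub_eq_zero.mp h]
    unfold margOf
    unfold cntH at hcnt
    rw [hcnt]
    field_simp
  exact eq_of_symmH hNe hx hsum hsymm γsupp glsum glsymm glsupp
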